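/- Define the integer sequence a by a_0 = 1, a_1 = 1, a_{2m} = −C_{m−1} for m ≥ 1, and a_{2m+1} = 0 for m ≥ 1 (the expansion of x + 1/c(x²) = 1 + x − x²·c(x²)). Then for every n, det((a_{i+j})_{0≤i,j≤n}) = (−1)^n·(n+1). -/

import Mathlib

/-- The concrete sequence. -/
private def aa : ℕ → ℤ
  | 0 => 1
  | 1 => 1
  | (n+2) => if n % 2 = 0 then -(catalan (n/2) : ℤ) else 0

/-- Coefficients of monic Chebyshev-like polynomials `S_k`. -/
private def sC : ℕ → ℕ → ℤ
  | 0, m => if m = 0 then 1 else 0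
  | 1, m => if m = 1 then 1 else 0
  | (k+2), 0 => - sC k 0
  | (k+2), (m+1) => sC (k+1) m - sC k (m+1)

private lemma sC_zero : ∀ k m, k < m → sC k m = 0
  | 0, m+1, _ => by simp [sC]
  | 1, m+1, h => by
      have : m + 1 ≠ 1 := by omega
      simp [sC, this]
      omega
  | (k+2), (m+1), h => by
      have h1 : sC (k+1) m = 0 := sC_zero (k+1) m (by omega)
      have h2 : sC k (m+1) = 0 := sC_zero k (m+1) (by omega)
      simp [sC, h1, h2]

private lemma sC_diag : ∀ k, sC k k = 1
  | 0 => by simp [sC]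
  | 1 => by simp [sC]
  | (k+2) => by
      have h1 := sC_diag (k+1)
      have h2 : sC k (k+2) = 0 := sC_zero k (k+2) (by omega)
      simp [sC, h1, h2]

private def ww (k j : ℕ) : ℤ := ∑ m ∈ Finset.range (k+1), sC k m * aa (m + j)

private lemma ww_ext (k j N : ℕ) (h : k + 1 ≤ N) :
    ∑ m ∈ Finset.range N, sC k m * aa (m + j) = ww k j := by
  rw [ww]
  refine (Finset.sum_subset (Finset.range_subset_range.2 h) ?_).symm
  intro x _ hx
  have hkx : k < x := by simpa [Finset.mem_range, Nat.lt_succ_iff] using hx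
  rw [sC_zero k x hkx, zero_mul]

private lemma ww0 (j : ℕ) : ww 0 j = aa j := by simp [ww, sC]

private lemma ww1 (j : ℕ) : ww 1 j = aa (j + 1) := by
  simp [ww, Finset.sum_range_succ, sC, Nat.add_comm]

private lemma ww_rec (k j : ℕ) : ww (k+2) j = ww (k+1) (j+1) - ww k j := by
  have e1 : ww (k+2) j
      = (∑ m ∈ Finset.range (k+2), sC (k+2) (m+1) * aa (m+1+j)) + sC (k+2) 0 * aa (0+j) :=
    Finset.sum_range_succ' _ _
  have e2 : ∀ m ∈ Finset.range (k+2), sC (k+2) (m+1) * aa (m+1+j)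
      = sC (k+1) m * aa (m + (j+1)) - sC k (m+1) * aa (m+1+j) := by
    intro m _
    have : sC (k+2) (m+1) = sC (k+1) m - sC k (m+1) := rfl
    rw [this, show m+1+j = m+(j+1) by omega]
    ring
  rw [e1, Finset.sum_congr rfl e2, Finset.sum_sub_distrib]
  have e3 : (∑ m ∈ Finset.range (k+2), sC (k+1) m * aa (m + (j+1))) = ww (k+1) (j+1) :=
    ww_ext (k+1) (j+1) (k+2) le_rfl
  have e4 : ww k j
      = (∑ m ∈ Finset.range (k+2), sC k (m+1) * aa (m+1+j)) + sC k 0 * aa (0+j) := by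
    rw [← ww_ext k j (k+3) (by omega)]
    exact Finset.sum_range_succ' _ _
  have e5 : sC (k+2) 0 = - sC k 0 := rfl
  rw [e3, e5]
  linarith [e4]
private def BB (k r : ℕ) : ℤ :=
  (Nat.choose (k + 2*r) r : ℤ) - (if r = 0 then 0 else (Nat.choose (k + 2*r) (r-1) : ℤ))

private lemma BB_pascal (k r : ℕ) : BB (k+2) r = BB (k+1) (r+1) - BB k (r+1) := by
  rcases r with _ | t
  · simp only [BB, if_pos rfl, if_neg (Nat.succ_ne_zero 0)]
    push_cast
    rw [show k + 1 + 2*1 = (k+2) + 1 by ring, show k + 2*1 = k + 1 + 1 by ring]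
    rw [Nat.choose_succ_succ (k+2) 0, Nat.choose_succ_succ (k+1) 0]
    push_cast
    simp [Nat.choose_zero_right]
  · simp only [BB, if_neg (Nat.succ_ne_zero t), Nat.succ_sub_one]
    have h1 : k + 1 + 2*(t+2) = (k + 2*(t+2)) + 1 := by ring
    have h2 : k + 2 + 2*(t+1) = k + 2*(t+2) := by ring
    rw [h1, h2]
    set N := k + 2*(t+2) with hN
    rw [Nat.choose_succ_succ N (t+1), Nat.choose_succ_succ N t]
    push_cast
    ring

private lemma cat_eq_BB0 (r : ℕ) : (catalan r : ℤ) = BB 0 r := by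
  rcases r with _ | t
  · simp [BB, catalan_zero]
  · have hne : ((t:ℤ) + 2) ≠ 0 := by positivity
    apply mul_left_cancel₀ hne
    have hcb : ((t:ℤ)+2) * (catalan (t+1) : ℤ) = ((t+1).centralBinom : ℤ) := by
      have := succ_mul_catalan_eq_centralBinom (t+1)
      have := congrArg (fun x : ℕ => (x : ℤ)) this
      push_cast at this ⊢
      linarith
    have hch : (t+1).centralBinom = (2*(t+1)).choose (t+1) := Nat.centralBinom_eq_two_mul_choose _
    have hsy : (2*(t+1)).choose t = (2*(t+1)).choose (t+2) := by
      have := Nat.choose_symm (n := 2*(t+1)) (k := t+2) (by omega)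
      rw [show 2*(t+1) - (t+2) = t by omega] at this
      exact this
    have hkey : (2*(t+1)).choose (t+2) * (t+2) = (2*(t+1)).choose (t+1) * (t+1) := by
      have := Nat.choose_succ_right_eq (2*(t+1)) (t+1)
      rw [show 2*(t+1) - (t+1) = t+1 by omega] at this
      exact this
    simp only [BB, if_neg (Nat.succ_ne_zero t), Nat.succ_sub_one]
    rw [hcb, hch, show 0 + 2*(t+1) = 2*(t+1) by ring]
    have hkey' : ((2*(t+1)).choose (t+2) : ℤ) * (t+2) = ((2*(t+1)).choose (t+1) : ℤ) * (t+1) := by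
      exact_mod_cast congrArg (fun x : ℕ => (x:ℤ)) hkey
    have hsy' : ((2*(t+1)).choose t : ℤ) = ((2*(t+1)).choose (t+2) : ℤ) := by exact_mod_cast hsy
    rw [hsy']
    linarith

private lemma cat_eq_BB1 (r : ℕ) : (catalan (r+1) : ℤ) = BB 1 r := by
  rcases r with _ | t
  · simp [BB, catalan_one]
  · rw [cat_eq_BB0 (t+2)]
    simp only [BB, if_neg (Nat.succ_ne_zero _), Nat.succ_sub_one]
    rw [show 0 + 2*(t+2) = (2*t+3) + 1 by ring, show 1 + 2*(t+1) = 2*t+3 by ring]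
    rw [Nat.choose_succ_succ (2*t+3) (t+1), Nat.choose_succ_succ (2*t+3) t]
    have hsy : (2*t+3).choose (t+2) = (2*t+3).choose (t+1) := by
      have := Nat.choose_symm (n := 2*t+3) (k := t+2) (by omega)
      rw [show 2*t+3 - (t+2) = t+1 by omega] at this
      exact this.symm
    rw [hsy]
    push_cast
    ring
private def PP (k : ℕ) : Prop :=
  (∀ r, ww k (k+2+2*r) = -(BB k r)) ∧ (∀ r, ww k (k+3+2*r) = 0) ∧
    (∀ j, 2 ≤ j → j ≤ k+1 → ww k j = 0)

private lemma aa_even (r : ℕ) : aa (2*r + 2) = -(catalan r : ℤ) := by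
  have h1 : (2*r) % 2 = 0 := by omega
  have h2 : (2*r) / 2 = r := by omega
  simp [aa, h1, h2]

private lemma aa_odd (r : ℕ) : aa (2*r + 3) = 0 := by
  have : aa (2*r+3) = aa ((2*r+1) + 2) := by norm_num
  rw [this]
  have h1 : (2*r+1) % 2 ≠ 0 := by omega
  simp [aa, h1]

private lemma PP0 : PP 0 := by
  refine ⟨fun r => ?_, fun r => ?_, fun j h2 h1 => by omega⟩
  · rw [ww0, show 0+2+2*r = 2*r+2 by omega, aa_even, cat_eq_BB0]
  · rw [ww0, show 0+3+2*r = 2*r+3 by omega, aa_odd]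

private lemma PP1 : PP 1 := by
  refine ⟨fun r => ?_, fun r => ?_, fun j h2 h1 => ?_⟩
  · rw [ww1, show 1+2+2*r+1 = 2*(r+1)+2 by omega, aa_even, cat_eq_BB1]
  · rw [ww1, show 1+3+2*r+1 = 2*(r+1)+3 by omega, aa_odd]
  · have : j = 2 := by omega
    subst this
    rw [ww1, show (2:ℕ)+1 = 2*0+3 by norm_num, aa_odd]

private lemma PP_step (k : ℕ) (hk : PP k) (hk1 : PP (k+1)) : PP (k+2) := by
  obtain ⟨he, ho, hz⟩ := hk
  obtain ⟨he1, ho1, hz1⟩ := hk1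
  refine ⟨fun r => ?_, fun r => ?_, fun j hj2 hjk => ?_⟩
  · rw [ww_rec, show k+2+2+2*r+1 = (k+1)+2+2*(r+1) by omega,
      show k+2+2+2*r = k+2+2*(r+1) by omega, he1, he, BB_pascal]
    ring
  · rw [ww_rec, show k+2+3+2*r+1 = (k+1)+3+2*(r+1) by omega,
      show k+2+3+2*r = k+3+2*(r+1) by omega, ho1, ho]
    ring
  · rw [ww_rec]
    rcases Nat.lt_or_ge j (k+2) with h | h
    · -- j ≤ k+1 : both zero
      have t1 : ww (k+1) (j+1) = 0 := hz1 (j+1) (by omega) (by omega)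
      have t2 : ww k j = 0 := hz j hj2 (by omega)
      rw [t1, t2]; ring
    · rcases Nat.lt_or_ge j (k+3) with h' | h'
      · -- j = k+2
        have hj : j = k+2 := by omega
        subst hj
        have t1 : ww (k+1) (k+3) = -(BB (k+1) 0) := by
          have := he1 0
          rwa [show (k+1)+2+2*0 = k+3 by omega] at this
        have t2 : ww k (k+2) = -(BB k 0) := by
          have := he 0
          rwa [show k+2+2*0 = k+2 by omega] at this
        rw [t1, t2]
        simp [BB]
      · -- j = k+3
        have hj : j = k+3 := by omega
        subst hj
        have t1 : ww (k+1) (k+4) = 0 := by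
          have := ho1 0
          rwa [show (k+1)+3+2*0 = k+4 by omega] at this
        have t2 : ww k (k+3) = 0 := by
          have := ho 0
          rwa [show k+3+2*0 = k+3 by omega] at this
        rw [t1, t2]; ring

private lemma PP_all : ∀ k, PP k := by
  have H : ∀ k, PP k ∧ PP (k+1) := by
    intro k
    induction k with
    | zero => exact ⟨PP0, PP1⟩
    | succ n ih => exact ⟨ih.2, PP_step n ih.1 ih.2⟩
  exact fun k => (H k).1

private lemma ww_zero {k j : ℕ} (h2 : 2 ≤ j) (h1 : j ≤ k+1) : ww k j = 0 :=
  (PP_all k).2.2 j h2 h1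

private lemma ww_diag2 (k : ℕ) : ww k (k+2) = -1 := by
  have := (PP_all k).1 0
  rw [show k+2+2*0 = k+2 by omega] at this
  rw [this]
  simp [BB]

-- columns 0 and 1
private lemma ww_col1 : ∀ t, ww (2*t) 1 = (-1)^t ∧ ww (2*t+1) 1 = -(-1)^t := by
  intro t
  induction t with
  | zero =>
    constructor
    · rw [show 2*0 = 0 by norm_num, ww0]; simp [aa]
    · rw [show 2*0+1 = 1 by norm_num, ww1]
      have : aa 2 = -(catalan 0 : ℤ) := by
        have := aa_even 0; simpa using this
      simp [this]
  | succ t ih =>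
    have r1 : ww (2*t+2) 1 = - ww (2*t) 1 := by
      rw [ww_rec, ww_zero (by omega) (by omega)]
      ring
    have r2 : ww (2*t+3) 1 = - ww (2*t+1) 1 := by
      rw [ww_rec, ww_zero (by omega) (by omega)]
      ring
    constructor
    · rw [show 2*(t+1) = 2*t+2 by ring, r1, ih.1]; ring
    · rw [show 2*(t+1)+1 = 2*t+3 by ring, r2, ih.2]; ring

private lemma ww_col0 : ∀ t, ww (2*t) 0 = (-1)^t * (t+1) ∧ ww (2*t+1) 0 = (-1)^t * (t+1) := by
  intro t
  induction t with
  | zero =>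
    constructor
    · rw [show 2*0 = 0 by norm_num, ww0]; simp [aa]
    · rw [show 2*0+1 = 1 by norm_num, ww1]; simp [aa]
  | succ t ih =>
    have r1 : ww (2*t+2) 0 = ww (2*t+1) 1 - ww (2*t) 0 := ww_rec _ _
    have r2 : ww (2*t+3) 0 = ww (2*t+2) 1 - ww (2*t+1) 0 := ww_rec _ _
    have c1 := (ww_col1 t).2
    have c2 : ww (2*t+2) 1 = (-1)^(t+1) := by
      have := (ww_col1 (t+1)).1
      rwa [show 2*(t+1) = 2*t+2 by ring] at this
    constructor
    · rw [show 2*(t+1) = 2*t+2 by ring, r1, c1, ih.1]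
      push_cast; ring
    · rw [show 2*(t+1)+1 = 2*t+3 by ring, r2, c2, ih.2]
      push_cast; ring
private def Qc : ℕ → ℕ → ℤ
  | 0, m => sC 0 m
  | 1, m => sC 1 m - sC 0 m
  | (k+2), m => (k+2) * sC (k+2) m + (-1)^k * sC (k+1) m + (k+3) * sC k m

private lemma Qc_zero : ∀ k m, k < m → Qc k m = 0
  | 0, m, h => by rw [show Qc 0 m = sC 0 m from rfl, sC_zero 0 m h]
  | 1, m, h => by
      rw [show Qc 1 m = sC 1 m - sC 0 m from rfl, sC_zero 1 m h, sC_zero 0 m (by omega)]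
      ring
  | (k+2), m, h => by
      rw [show Qc (k+2) m = (k+2) * sC (k+2) m + (-1)^k * sC (k+1) m + (k+3) * sC k m from rfl,
        sC_zero (k+2) m h, sC_zero (k+1) m (by omega), sC_zero k m (by omega)]
      ring

private lemma Qc_diag0 : Qc 0 0 = 1 := by
  rw [show Qc 0 0 = sC 0 0 from rfl, sC_diag]

private lemma Qc_diag (k : ℕ) : Qc (k+1) (k+1) = (k+1 : ℤ) := by
  rcases k with _ | k
  · rw [show Qc 1 1 = sC 1 1 - sC 0 1 from rfl, sC_diag, sC_zero 0 1 (by omega)]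
    norm_num
  · rw [show Qc (k+2) (k+2) = (k+2) * sC (k+2) (k+2) + (-1)^k * sC (k+1) (k+2)
        + (k+3) * sC k (k+2) from rfl,
      sC_diag, sC_zero (k+1) (k+2) (by omega), sC_zero k (k+2) (by omega)]
    push_cast
    ring

private def Vv (k j : ℕ) : ℤ := ∑ m ∈ Finset.range (k+1), Qc k m * aa (m + j)

private lemma Vv0 (j : ℕ) : Vv 0 j = ww 0 j := rfl

private lemma Vv1 (j : ℕ) : Vv 1 j = ww 1 j - ww 0 j := by
  rw [Vv, ww]
  rw [show (∑ m ∈ Finset.range 2, Qc 1 m * aa (m + j))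
      = ∑ m ∈ Finset.range 2, (sC 1 m * aa (m+j) - sC 0 m * aa (m+j)) from
    Finset.sum_congr rfl (fun m _ => by
      rw [show Qc 1 m = sC 1 m - sC 0 m from rfl]; ring)]
  rw [Finset.sum_sub_distrib, ww_ext 0 j 2 (by omega)]

private lemma Vv2 (k j : ℕ) :
    Vv (k+2) j = (k+2) * ww (k+2) j + (-1)^k * ww (k+1) j + (k+3) * ww k j := by
  rw [Vv]
  rw [show (∑ m ∈ Finset.range (k+3), Qc (k+2) m * aa (m + j))
      = ∑ m ∈ Finset.range (k+3), ((k+2 : ℤ) * (sC (k+2) m * aa (m+j))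
        + (-1)^k * (sC (k+1) m * aa (m+j)) + (k+3) * (sC k m * aa (m+j))) from
    Finset.sum_congr rfl (fun m _ => by
      rw [show Qc (k+2) m = (k+2) * sC (k+2) m + (-1)^k * sC (k+1) m + (k+3) * sC k m from rfl]
      ring)]
  rw [Finset.sum_add_distrib, Finset.sum_add_distrib, ← Finset.mul_sum, ← Finset.mul_sum,
    ← Finset.mul_sum, ww_ext (k+2) j (k+3) le_rfl, ww_ext (k+1) j (k+3) (by omega),
    ww_ext k j (k+3) (by omega)]

private lemma neg_one_pow_2t (t : ℕ) : ((-1 : ℤ))^(2*t) = 1 := by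
  rw [pow_mul]; norm_num

private lemma neg_one_pow_2t1 (t : ℕ) : ((-1 : ℤ))^(2*t+1) = -1 := by
  rw [pow_succ, neg_one_pow_2t]; norm_num

private lemma ww_col0_e (t : ℕ) : ww (2*t) 0 = (-1)^t * (t+1) := (ww_col0 t).1
private lemma ww_col0_o (t : ℕ) : ww (2*t+1) 0 = (-1)^t * (t+1) := (ww_col0 t).2
private lemma ww_col1_e (t : ℕ) : ww (2*t) 1 = (-1)^t := (ww_col1 t).1
private lemma ww_col1_o (t : ℕ) : ww (2*t+1) 1 = -(-1)^t := (ww_col1 t).2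

private lemma Vv_c0e (t : ℕ) : Vv (2*t+2) 0 = 0 := by
  rw [show 2*t+2 = (2*t)+2 by ring, Vv2]
  have h1 : ww (2*t+2) 0 = (-1)^(t+1) * ((t+1)+1) := by
    have := ww_col0_e (t+1); rwa [show 2*(t+1) = 2*t+2 by ring] at this
  rw [h1, ww_col0_o t, ww_col0_e t, neg_one_pow_2t, pow_succ]
  push_cast
  ring

private lemma Vv_c0o (t : ℕ) : Vv (2*t+3) 0 = 0 := by
  rw [show 2*t+3 = (2*t+1)+2 by ring, Vv2]
  have h1 : ww (2*t+3) 0 = (-1)^(t+1) * ((t+1)+1) := by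
    have := ww_col0_o (t+1); rwa [show 2*(t+1)+1 = 2*t+3 by ring] at this
  have h2 : ww (2*t+2) 0 = (-1)^(t+1) * ((t+1)+1) := by
    have := ww_col0_e (t+1); rwa [show 2*(t+1) = 2*t+2 by ring] at this
  rw [h1, h2, ww_col0_o t, neg_one_pow_2t1, pow_succ]
  push_cast
  ring

private lemma Vv_c1e (t : ℕ) : Vv (2*t+2) 1 = 0 := by
  rw [show 2*t+2 = (2*t)+2 by ring, Vv2]
  have h1 : ww (2*t+2) 1 = (-1)^(t+1) := by
    have := ww_col1_e (t+1); rwa [show 2*(t+1) = 2*t+2 by ring] at this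
  rw [h1, ww_col1_o t, ww_col1_e t, neg_one_pow_2t, pow_succ]
  push_cast
  ring

private lemma Vv_c1o (t : ℕ) : Vv (2*t+3) 1 = 0 := by
  rw [show 2*t+3 = (2*t+1)+2 by ring, Vv2]
  have h1 : ww (2*t+3) 1 = -(-1)^(t+1) := by
    have := ww_col1_o (t+1); rwa [show 2*(t+1)+1 = 2*t+3 by ring] at this
  have h2 : ww (2*t+2) 1 = (-1)^(t+1) := by
    have := ww_col1_e (t+1); rwa [show 2*(t+1) = 2*t+2 by ring] at this
  rw [h1, h2, ww_col1_o t, neg_one_pow_2t1, pow_succ]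
  push_cast
  ring

private lemma Vv_lt : ∀ k j, j < k → Vv k j = 0 := by
  intro k j h
  rcases k with _ | _ | k
  · omega
  · have hj : j = 0 := by omega
    subst hj
    rw [Vv1, ww1, ww0]
    simp [aa]
  · rcases Nat.lt_or_ge j 2 with hj2 | hj2
    · rcases Nat.even_or_odd k with ⟨t, ht⟩ | ⟨t, ht⟩
      · interval_cases j
        · rw [show k+2 = 2*t+2 by omega]; exact Vv_c0e t
        · rw [show k+2 = 2*t+2 by omega]; exact Vv_c1e t
      · interval_cases j
        · rw [show k+2 = 2*t+3 by omega]; exact Vv_c0o t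
        · rw [show k+2 = 2*t+3 by omega]; exact Vv_c1o t
    · rw [Vv2, ww_zero hj2 (by omega), ww_zero hj2 (by omega), ww_zero hj2 (by omega)]
      ring

private lemma Vv_diag : ∀ k, Vv k k = if k = 0 then 1 else -(k+1 : ℤ) := by
  intro k
  rcases k with _ | _ | k
  · rw [Vv0, ww0]; simp [aa]
  · rw [Vv1, ww1]
    have h2 : aa 2 = -(catalan 0 : ℤ) := by have := aa_even 0; simpa using this
    rw [ww0]
    simp [aa, h2]
  · rw [Vv2, ww_zero (by omega) (by omega), ww_zero (by omega) (by omega), ww_diag2]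
    simp only [if_neg (Nat.succ_ne_zero _)]
    push_cast
    ring
private lemma Vv_ext (k j N : ℕ) (h : k + 1 ≤ N) :
    ∑ m ∈ Finset.range N, Qc k m * aa (m + j) = Vv k j := by
  rw [Vv]
  refine (Finset.sum_subset (Finset.range_subset_range.2 h) ?_).symm
  intro x _ hx
  have hkx : k < x := by simpa [Finset.mem_range, Nat.lt_succ_iff] using hx
  rw [Qc_zero k x hkx, zero_mul]

private lemma prodQ : ∀ n : ℕ, ∏ k ∈ Finset.range (n+1), Qc k k = (Nat.factorial n : ℤ) := by
  intro n
  induction n with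
  | zero => simp [Qc_diag0, Nat.factorial]
  | succ n ih =>
    rw [Finset.prod_range_succ, ih, Qc_diag n, Nat.factorial_succ]
    push_cast
    ring

private lemma prodV : ∀ n : ℕ, ∏ k ∈ Finset.range (n+1), Vv k k
    = (-1)^n * (Nat.factorial (n+1) : ℤ) := by
  intro n
  induction n with
  | zero => simp [Vv_diag 0, Nat.factorial]
  | succ n ih =>
    rw [Finset.prod_range_succ, ih, Vv_diag (n+1), if_neg (Nat.succ_ne_zero n),
      Nat.factorial_succ (n+1)]
    push_cast
    ring

/-- The Hankel transform of the sequence `1, 1, -C_0, 0, -C_1, 0, -C_2, 0, …` (the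
expansion of `x + 1/c(x²) = 1 + x - x²·c(x²)`) is `(-1)^n · (n+1)`. -/
theorem hankel_transform_one_add_x_sub_xsq_catalanSq (a : ℕ → ℤ)
    (h0 : a 0 = 1) (h1 : a 1 = 1)
    (heven : ∀ m : ℕ, 1 ≤ m → a (2 * m) = -(catalan (m - 1) : ℤ))
    (hodd : ∀ m : ℕ, 1 ≤ m → a (2 * m + 1) = 0) (n : ℕ) :
    Matrix.det (Matrix.of fun i j : Fin (n + 1) => a (i.1 + j.1)) =
      (-1) ^ n * (n + 1) := by
  have ha : ∀ m, a m = aa m := by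
    intro m
    rcases m with _ | _ | m
    · rw [h0]; rfl
    · rw [h1]; rfl
    · rcases Nat.even_or_odd m with ⟨t, ht⟩ | ⟨t, ht⟩
      · rw [show m + 2 = 2 * (t+1) by omega, heven (t+1) (by omega)]
        have h2 : aa (2*(t+1)) = -(catalan t : ℤ) := by
          have := aa_even t; rwa [show 2*t+2 = 2*(t+1) by ring] at this
        rw [h2, show t + 1 - 1 = t by omega]
      · rw [show m + 2 = 2 * (t+1) + 1 by omega, hodd (t+1) (by omega)]
        have h2 : aa (2*(t+1)+1) = 0 := by
          have := aa_odd t; rwa [show 2*t+3 = 2*(t+1)+1 by ring] at this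
        rw [h2]
  set HH : Matrix (Fin (n+1)) (Fin (n+1)) ℤ :=
    Matrix.of fun i j : Fin (n + 1) => a (i.1 + j.1) with hHH
  set Qm : Matrix (Fin (n+1)) (Fin (n+1)) ℤ :=
    Matrix.of fun k m : Fin (n + 1) => Qc k.1 m.1 with hQm
  have hmul : ∀ k j : Fin (n+1), (Qm * HH) k j = Vv k.1 j.1 := by
    intro k j
    rw [Matrix.mul_apply]
    have e : ∀ m : Fin (n+1), Qm k m * HH m j = Qc k.1 m.1 * aa (m.1 + j.1) := by
      intro m
      rw [hQm, hHH]
      simp only [Matrix.of_apply]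
      rw [ha]
    rw [Finset.sum_congr rfl (fun m _ => e m),
      Fin.sum_univ_eq_sum_range (fun m => Qc k.1 m * aa (m + j.1)) (n+1),
      Vv_ext k.1 j.1 (n+1) (by omega)]
  have hut : (Qm * HH).BlockTriangular id := by
    intro i j hij
    rw [hmul i j]
    exact Vv_lt i.1 j.1 hij
  have hlt : Qm.BlockTriangular OrderDual.toDual := by
    intro i j hij
    rw [hQm]
    simp only [Matrix.of_apply]
    exact Qc_zero i.1 j.1 hij
  have hdet1 : (Qm * HH).det = (-1)^n * (Nat.factorial (n+1) : ℤ) := by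
    rw [Matrix.det_of_upperTriangular hut]
    calc ∏ i : Fin (n+1), (Qm * HH) i i = ∏ i : Fin (n+1), Vv i.1 i.1 :=
          Finset.prod_congr rfl (fun i _ => hmul i i)
      _ = ∏ k ∈ Finset.range (n+1), Vv k k :=
          Fin.prod_univ_eq_prod_range (fun k => Vv k k) (n+1)
      _ = (-1)^n * (Nat.factorial (n+1) : ℤ) := prodV n
  have hdetQ : Qm.det = (Nat.factorial n : ℤ) := by
    rw [Matrix.det_of_lowerTriangular Qm hlt]
    calc ∏ i : Fin (n+1), Qm i i = ∏ i : Fin (n+1), Qc i.1 i.1 :=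
          Finset.prod_congr rfl (fun i _ => by rw [hQm]; simp only [Matrix.of_apply])
      _ = ∏ k ∈ Finset.range (n+1), Qc k k :=
          Fin.prod_univ_eq_prod_range (fun k => Qc k k) (n+1)
      _ = (Nat.factorial n : ℤ) := prodQ n
  have hmain : (Nat.factorial n : ℤ) * HH.det = (-1)^n * (Nat.factorial (n+1) : ℤ) := by
    rw [← hdetQ, ← Matrix.det_mul, hdet1]
  have hne : (Nat.factorial n : ℤ) ≠ 0 := by
    exact_mod_cast Nat.factorial_ne_zero n
  apply mul_left_cancel₀ hne
  rw [hmain, Nat.factorial_succ]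
  push_cast
  ring
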